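/- Branching probabilistic bisimilarity is a congruence for binary probabilistic choice: if μ₁ ≈_b ν₁ and μ₂ ≈_b ν₂ then μ₁ ⊕_r μ₂ ≈_b ν₁ ⊕_r ν₂ for any r ∈ (0,1). -/

import Mathlib

open scoped BigOperators
open Classical

namespace PBB

structure Distr (X : Type) where
  f : X → ℝ
  nonneg : ∀ x, 0 ≤ f x
  fin : (Function.support f).Finite
  sum_one : ∑ᶠ x, f x = 1

namespace Distr

variable {X : Type}

noncomputable def dirac (E : X) : Distr X where
  f := fun x => if x = E then 1 else 0
  nonneg := fun x => by by_cases h : x = E <;> simp [h]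
  fin := Set.Finite.subset (Set.finite_singleton E) (by
    intro x hx
    simp only [Function.mem_support] at hx
    by_contra h
    simp only [Set.mem_singleton_iff] at h
    simp [h] at hx)
  sum_one := by
    rw [finsum_eq_single _ E (by intro x hx; simp [hx])]
    simp

noncomputable def mix (r : ℝ) (h0 : 0 ≤ r) (h1 : r ≤ 1) (μ ν : Distr X) : Distr X where
  f := fun x => r * μ.f x + (1 - r) * ν.f x
  nonneg := fun x =>
    add_nonneg (mul_nonneg h0 (μ.nonneg x)) (mul_nonneg (by linarith) (ν.nonneg x))
  fin := Set.Finite.subset (μ.fin.union ν.fin) (by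
    intro x hx
    simp only [Function.mem_support] at hx
    by_contra h
    simp only [Set.mem_union, Function.mem_support, not_or, not_not] at h
    simp [h.1, h.2] at hx)
  sum_one := by
    have hf : (Function.support fun x => r * μ.f x).Finite :=
      Set.Finite.subset μ.fin (by
        intro x hx
        simp only [Function.mem_support] at hx ⊢
        intro h; simp [h] at hx)
    have hg : (Function.support fun x => (1 - r) * ν.f x).Finite :=
      Set.Finite.subset ν.fin (by
        intro x hx
        simp only [Function.mem_support] at hx ⊢
        intro h; simp [h] at hx)
    rw [finsum_add_distrib hf hg, ← mul_finsum μ.f r, ← mul_finsum ν.f (1 - r),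
      μ.sum_one, ν.sum_one]
    ring

end Distr

def IsMix {X : Type} (r : ℝ) (μ ν ξ : Distr X) : Prop :=
  ∀ x, ξ.f x = r * μ.f x + (1 - r) * ν.f x

def IsCombo {X I : Type} [Fintype I] (p : I → ℝ) (μs : I → Distr X) (ξ : Distr X) : Prop :=
  (∀ i, 0 ≤ p i) ∧ (∑ i, p i = 1) ∧ ∀ x, ξ.f x = ∑ i, p i * (μs i).f x

/-! ### The probabilistic process calculus -/

mutual
/-- Non-deterministic processes: `E ::= 0 | α.P | E + E`. -/
inductive PE (Act : Type) : Type where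
  | zero : PE Act
  | pre : Act → PP Act → PE Act
  | plus : PE Act → PE Act → PE Act

/-- Probabilistic processes: `P ::= ∂(E) | P ⊕_r P` with `r ∈ (0,1)`. -/
inductive PP (Act : Type) : Type where
  | dirac : PE Act → PP Act
  | pchoice : PP Act → (r : ℝ) → 0 < r → r < 1 → PP Act → PP Act
end

variable {Act : Type}

/-- The distribution `⟦P⟧` denoted by a probabilistic process. -/
noncomputable def den : PP Act → Distr (PE Act)
  | .dirac E => Distr.dirac E
  | .pchoice P r h0 h1 Q => Distr.mix r h0.le h1.le (den P) (den Q)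

/-- The transition relation `E →α μ` on non-deterministic processes. -/
inductive pstep : PE Act → Act → Distr (PE Act) → Prop where
  | pre (α : Act) (P : PP Act) : pstep (.pre α P) α (den P)
  | left {E₁ E₂ : PE Act} {α : Act} {μ : Distr (PE Act)} :
      pstep E₁ α μ → pstep (.plus E₁ E₂) α μ
  | right {E₁ E₂ : PE Act} {α : Act} {μ : Distr (PE Act)} :
      pstep E₂ α μ → pstep (.plus E₁ E₂) α μ

/-- The (combined) transition relation `μ →α μ'` on distributions. -/
def dstep (μ : Distr (PE Act)) (α : Act) (μ' : Distr (PE Act)) : Prop :=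
  ∃ (I : Type) (_ : Fintype I) (p : I → ℝ) (Es : I → PE Act) (μs : I → Distr (PE Act)),
    IsCombo p (fun i => Distr.dirac (Es i)) μ ∧ IsCombo p μs μ' ∧
    ∀ i, pstep (Es i) α (μs i)

variable (τ : Act)

/-- The partial silent step `μ →(τ) μ'`. -/
def ptau (μ μ' : Distr (PE Act)) : Prop :=
  dstep μ τ μ' ∨
  ∃ (s : ℝ) (μ₁ μ₂ μ₁' : Distr (PE Act)), 0 ≤ s ∧ s ≤ 1 ∧
    IsMix s μ₁ μ₂ μ ∧ IsMix s μ₁' μ₂ μ' ∧ dstep μ₁ τ μ₁'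

/-- `μ ⟹ μ'`: the reflexive-transitive closure of `→(τ)`. -/
def wtau : Distr (PE Act) → Distr (PE Act) → Prop :=
  Relation.ReflTransGen (ptau τ)

/-- The optional step `μ →(α) μ'`. -/
def optStep (μ : Distr (PE Act)) (α : Act) (μ' : Distr (PE Act)) : Prop :=
  dstep μ α μ' ∨ (α = τ ∧ ptau τ μ μ')

/-- Weak decomposability of a relation on distributions. -/
def WeaklyDecomposable (R : Distr (PE Act) → Distr (PE Act) → Prop) : Prop :=
  ∀ (I : Type) (_ : Fintype I) (p : I → ℝ) (μs : I → Distr (PE Act))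
    (μ ν : Distr (PE Act)),
    R μ ν → IsCombo p μs μ →
    ∃ (ν' : Distr (PE Act)) (νs : I → Distr (PE Act)),
      wtau τ ν ν' ∧ R μ ν' ∧ IsCombo p νs ν' ∧ ∀ i, R (μs i) (νs i)

/-- Decomposability of a relation on distributions. -/
def Decomposable (R : Distr (PE Act) → Distr (PE Act) → Prop) : Prop :=
  ∀ (I : Type) (_ : Fintype I) (p : I → ℝ) (μs : I → Distr (PE Act))
    (μ ν : Distr (PE Act)),
    R μ ν → IsCombo p μs μ →
    ∃ νs : I → Distr (PE Act), IsCombo p νs ν ∧ ∀ i, R (μs i) (νs i)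

/-- Branching probabilistic bisimulation relations. -/
def IsBranchingBisim (R : Distr (PE Act) → Distr (PE Act) → Prop) : Prop :=
  Symmetric R ∧ WeaklyDecomposable τ R ∧
  ∀ μ ν α μ', R μ ν → dstep μ α μ' →
    ∃ ν' ν'', wtau τ ν ν' ∧ optStep τ ν' α ν'' ∧ R μ ν' ∧ R μ' ν''

/-- Branching probabilistic bisimilarity `≈_b`. -/
def bb (μ ν : Distr (PE Act)) : Prop :=
  ∃ R, IsBranchingBisim τ R ∧ R μ ν

/-- Strong probabilistic bisimulation relations. -/
def IsStrongBisim (R : Distr (PE Act) → Distr (PE Act) → Prop) : Prop :=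
  Symmetric R ∧ Decomposable R ∧
  ∀ μ ν α μ', R μ ν → dstep μ α μ' →
    ∃ ν', dstep ν α ν' ∧ R μ' ν'

/-- Strong probabilistic bisimilarity `∼`. -/
def sb (μ ν : Distr (PE Act)) : Prop :=
  ∃ R, IsStrongBisim R ∧ R μ ν

/-- Rooted branching probabilistic bisimulation relations. -/
def IsRootedBranchingBisim (R : Distr (PE Act) → Distr (PE Act) → Prop) : Prop :=
  Symmetric R ∧ Decomposable R ∧
  ∀ μ ν α μ', R μ ν → dstep μ α μ' →
    ∃ ν', dstep ν α ν' ∧ bb τ μ' ν'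

/-- Rooted branching probabilistic bisimilarity `≈_rb`. -/
def rbb (μ ν : Distr (PE Act)) : Prop :=
  ∃ R, IsRootedBranchingBisim τ R ∧ R μ ν

/-- `≈_b`-stability of a distribution. -/
def Stable (μ : Distr (PE Act)) : Prop :=
  ∀ μ', wtau τ μ μ' → bb τ μ μ' → μ' = μ

/-- A state is rigid iff it admits no inert `τ`-transition. -/
def Rigid (E : PE Act) : Prop :=
  ¬ ∃ μ, pstep E τ μ ∧ bb τ (Distr.dirac E) μ

/-- `E ⊑ P`: every transition of `E` is matched by an optional transition of `⟦P⟧`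
with branching probabilistically bisimilar target. -/
def sq (E : PE Act) (P : PP Act) : Prop :=
  ∀ α μ, pstep E α μ → ∃ ν, optStep τ (den P) α ν ∧ bb τ μ ν



/-! ### Auxiliary development -/

namespace Distr

variable {X : Type}

theorem ext' {μ ν : Distr X} (h : ∀ x, μ.f x = ν.f x) : μ = ν := by
  cases μ; cases ν
  simp only [Distr.mk.injEq]
  exact funext h

theorem sum_finset (μ : Distr X) {s : Finset X} (h : Function.support μ.f ⊆ s) :
    ∑ x ∈ s, μ.f x = 1 := by
  rw [← finsum_eq_finset_sum_of_support_subset _ h, μ.sum_one]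

/-- The big finset containing the supports of finitely many distributions. -/
noncomputable def bigSupp {I : Type} [Fintype I] (μs : I → Distr X) : Finset X :=
  (Set.Finite.toFinset (Set.finite_iUnion fun i => (μs i).fin))

theorem supp_subset_bigSupp {I : Type} [Fintype I] (μs : I → Distr X) (i : I) :
    Function.support (μs i).f ⊆ bigSupp μs := by
  intro x hx
  simp only [bigSupp, Set.Finite.coe_toFinset, Set.mem_iUnion]
  exact ⟨i, hx⟩

/-- Convex combination of finitely many distributions. -/
noncomputable def combo {I : Type} [Fintype I] (p : I → ℝ) (μs : I → Distr X)
    (hp : ∀ i, 0 ≤ p i) (hs : ∑ i, p i = 1) : Distr X where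
  f := fun x => ∑ i, p i * (μs i).f x
  nonneg := fun x => Finset.sum_nonneg fun i _ => mul_nonneg (hp i) ((μs i).nonneg x)
  fin := by
    apply Set.Finite.subset (Set.finite_iUnion fun i => (μs i).fin)
    intro x hx
    simp only [Function.mem_support] at hx
    by_contra h
    simp only [Set.mem_iUnion, Function.mem_support, not_exists, not_not] at h
    exact hx (Finset.sum_eq_zero fun i _ => by rw [h i, mul_zero])
  sum_one := by
    have hsub : Function.support (fun x => ∑ i, p i * (μs i).f x) ⊆ (bigSupp μs : Set X) := by
      intro x hx
      simp only [Function.mem_support] at hx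
      by_contra h
      refine hx (Finset.sum_eq_zero fun i _ => ?_)
      have : (μs i).f x = 0 := by
        by_contra h'
        exact h (supp_subset_bigSupp μs i h')
      rw [this, mul_zero]
    rw [finsum_eq_finset_sum_of_support_subset _ hsub, Finset.sum_comm]
    calc ∑ i, ∑ x ∈ bigSupp μs, p i * (μs i).f x
        = ∑ i, p i * ∑ x ∈ bigSupp μs, (μs i).f x := by
          refine Finset.sum_congr rfl fun i _ => ?_; rw [Finset.mul_sum]
      _ = ∑ i, p i := by
          refine Finset.sum_congr rfl fun i _ => ?_
          rw [(μs i).sum_finset (supp_subset_bigSupp μs i), mul_one]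
      _ = 1 := hs

@[simp] theorem combo_f {I : Type} [Fintype I] (p : I → ℝ) (μs : I → Distr X)
    (hp : ∀ i, 0 ≤ p i) (hs : ∑ i, p i = 1) (x : X) :
    (combo p μs hp hs).f x = ∑ i, p i * (μs i).f x := rfl

/-- If the support of a distribution is contained in `{E}`, it is `dirac E`. -/
theorem eq_dirac {μ : Distr X} {E : X} (h : Function.support μ.f ⊆ {E}) :
    μ = dirac E := by
  have hE : μ.f E = 1 := by
    have := μ.sum_one
    rwa [finsum_eq_single _ E (fun x hx => by
      by_contra h'
      exact hx (h h'))] at this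
  apply ext'
  intro x
  by_cases hx : x = E
  · subst hx; simp [dirac, hE]
  · have : μ.f x = 0 := by
      by_contra h'
      exact hx (h h')
    simp [dirac, hx, this]

end Distr
section Steps
variable {Act : Type} {τ : Act}

theorem isCombo_combo {X I : Type} [Fintype I] (p : I → ℝ) (μs : I → Distr X)
    (hp : ∀ i, 0 ≤ p i) (hs : ∑ i, p i = 1) :
    IsCombo p μs (Distr.combo p μs hp hs) := ⟨hp, hs, fun _ => rfl⟩

theorem isCombo_of_eq {X I : Type} [Fintype I] {p : I → ℝ} {μs νs : I → Distr X} {μ : Distr X}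
    (h : IsCombo p μs μ) (he : ∀ i, p i ≠ 0 → μs i = νs i) : IsCombo p νs μ := by
  refine ⟨h.1, h.2.1, fun x => ?_⟩
  rw [h.2.2 x]
  refine Finset.sum_congr rfl fun i _ => ?_
  by_cases hi : p i = 0
  · rw [hi, zero_mul, zero_mul]
  · rw [he i hi]


theorem sum_sigma_univ {I : Type} [Fintype I] {J : I → Type} [inst : ∀ i, Fintype (J i)]
    (f : (Σ i, J i) → ℝ) : ∑ z : Σ i, J i, f z = ∑ i, ∑ j, f ⟨i, j⟩ := by
  rw [← Finset.univ_sigma_univ, Finset.sum_sigma]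

/-- `dirac (α.P) →α ⟦P⟧`. -/
theorem dstep_dirac_pre (α : Act) (P : PP Act) :
    dstep (Distr.dirac (PE.pre α P)) α (den P) := by
  refine ⟨PUnit, inferInstance, fun _ => 1, fun _ => PE.pre α P, fun _ => den P, ?_, ?_, ?_⟩
  · exact ⟨fun _ => zero_le_one, by simp, fun x => by simp⟩
  · exact ⟨fun _ => zero_le_one, by simp, fun x => by simp⟩
  · exact fun _ => pstep.pre α P

/-- `ptau` is reflexive. -/
theorem ptau_refl (μ : Distr (PE Act)) : ptau τ μ μ := by
  refine Or.inr ⟨0, Distr.dirac (PE.pre τ (PP.dirac PE.zero)), μ,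
    den (PP.dirac PE.zero), le_refl 0, zero_le_one, ?_, ?_, dstep_dirac_pre τ _⟩
  · intro x; ring
  · intro x; ring

/-- Combining `dstep`s along a convex combination (all components step). -/
theorem dstep_combo_all {I : Type} [Fintype I] {p : I → ℝ} {a b : I → Distr (PE Act)}
    {μ μ' : Distr (PE Act)} {α : Act}
    (hμ : IsCombo p a μ) (hμ' : IsCombo p b μ')
    (h : ∀ i, dstep (a i) α (b i)) : dstep μ α μ' := by
  choose J ftJ q Es ms h1 h2 h3 using h
  refine ⟨(Σ i, J i), @Sigma.instFintype I J ftJ _, fun z => p z.1 * q z.1 z.2,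
    fun z => Es z.1 z.2, fun z => ms z.1 z.2, ?_, ?_, fun z => h3 z.1 z.2⟩
  · refine ⟨fun z => mul_nonneg (hμ.1 z.1) ((h1 z.1).1 z.2), ?_, fun x => ?_⟩
    · rw [sum_sigma_univ (inst := ftJ)]
      calc ∑ i, ∑ j, p i * q i j = ∑ i, p i * ∑ j, q i j := by
            exact Finset.sum_congr rfl fun i _ => (Finset.mul_sum _ _ _).symm
        _ = ∑ i, p i := Finset.sum_congr rfl fun i _ => by rw [(h1 i).2.1, mul_one]
        _ = 1 := hμ.2.1
    · rw [hμ.2.2 x, sum_sigma_univ]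
      refine Finset.sum_congr rfl fun i _ => ?_
      rw [(h1 i).2.2 x, Finset.mul_sum]
      exact Finset.sum_congr rfl fun j _ => by ring
  · refine ⟨fun z => mul_nonneg (hμ.1 z.1) ((h1 z.1).1 z.2), ?_, fun x => ?_⟩
    · rw [sum_sigma_univ (inst := ftJ)]
      calc ∑ i, ∑ j, p i * q i j = ∑ i, p i * ∑ j, q i j := by
            exact Finset.sum_congr rfl fun i _ => (Finset.mul_sum _ _ _).symm
        _ = ∑ i, p i := Finset.sum_congr rfl fun i _ => by rw [(h1 i).2.1, mul_one]
        _ = 1 := hμ.2.1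
    · rw [hμ'.2.2 x, sum_sigma_univ]
      refine Finset.sum_congr rfl fun i _ => ?_
      rw [(h2 i).2.2 x, Finset.mul_sum]
      exact Finset.sum_congr rfl fun j _ => by ring

/-- Combining `dstep`s along a convex combination (zero-weight components need not step). -/
theorem dstep_combo {I : Type} [Fintype I] {p : I → ℝ} {a b : I → Distr (PE Act)}
    {μ μ' : Distr (PE Act)} {α : Act}
    (hμ : IsCombo p a μ) (hμ' : IsCombo p b μ')
    (h : ∀ i, p i ≠ 0 → dstep (a i) α (b i)) : dstep μ α μ' := by
  classical
  set a' : I → Distr (PE Act) :=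
    fun i => if p i = 0 then Distr.dirac (PE.pre α (PP.dirac PE.zero)) else a i with ha'
  set b' : I → Distr (PE Act) :=
    fun i => if p i = 0 then den (PP.dirac PE.zero) else b i with hb'
  refine dstep_combo_all (a := a') (b := b')
    (isCombo_of_eq hμ fun i hi => by simp [ha', hi])
    (isCombo_of_eq hμ' fun i hi => by simp [hb', hi]) fun i => ?_
  by_cases hi : p i = 0
  · simp only [ha', hb', hi, if_pos]
    exact dstep_dirac_pre α _
  · simpa [ha', hb', hi] using h i hi

end Steps
section Tau
variable {Act : Type} {τ : Act}

/-- Normalized form of `ptau`. -/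
theorem ptau_iff {μ μ' : Distr (PE Act)} :
    ptau τ μ μ' ↔ ∃ (s : ℝ) (μ₁ μ₂ μ₁' : Distr (PE Act)), 0 ≤ s ∧ s ≤ 1 ∧
      IsMix s μ₁ μ₂ μ ∧ IsMix s μ₁' μ₂ μ' ∧ dstep μ₁ τ μ₁' := by
  constructor
  · rintro (h | h)
    · exact ⟨1, μ, μ, μ', zero_le_one, le_refl 1,
        fun x => by ring, fun x => by ring, h⟩
    · exact h
  · intro h
    exact Or.inr h

theorem isMix_congr {X : Type} {s : ℝ} {μ₁ μ₂ ξ ξ' : Distr X}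
    (h : IsMix s μ₁ μ₂ ξ) (he : ξ = ξ') : IsMix s μ₁ μ₂ ξ' := he ▸ h

/-- Combining `ptau`s along a convex combination. -/
theorem ptau_combo_all {I : Type} [Fintype I] {p : I → ℝ} {a b : I → Distr (PE Act)}
    {μ μ' : Distr (PE Act)}
    (hμ : IsCombo p a μ) (hμ' : IsCombo p b μ')
    (h : ∀ i, ptau τ (a i) (b i)) : ptau τ μ μ' := by
  classical
  have h' := fun i => (ptau_iff).1 (h i)
  choose s κ ρ κ' hs0 hs1 hma hmb hd using h'
  set S : ℝ := ∑ i, p i * s i with hS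
  have hS0 : 0 ≤ S := Finset.sum_nonneg fun i _ => mul_nonneg (hμ.1 i) (hs0 i)
  have hS1 : S ≤ 1 := by
    rw [← hμ.2.1]
    exact Finset.sum_le_sum fun i _ =>
      (mul_le_of_le_one_right (hμ.1 i) (hs1 i)).trans (le_refl (p i))
  by_cases hSz : S = 0
  · -- no actual movement: μ = μ'
    have hz : ∀ i, p i * s i = 0 := fun i =>
      (Finset.sum_eq_zero_iff_of_nonneg
        (fun i _ => mul_nonneg (hμ.1 i) (hs0 i))).1 (hS ▸ hSz) i (Finset.mem_univ i)
    have : μ = μ' := by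
      apply Distr.ext'
      intro x
      rw [hμ.2.2 x, hμ'.2.2 x]
      refine Finset.sum_congr rfl fun i _ => ?_
      rw [hma i x, hmb i x]
      have h2 : p i * (s i * (κ i).f x) = 0 := by
        rw [← mul_assoc, hz i, zero_mul]
      have h3 : p i * (s i * (κ' i).f x) = 0 := by
        rw [← mul_assoc, hz i, zero_mul]
      calc p i * (s i * (κ i).f x + (1 - s i) * (ρ i).f x)
          = p i * (s i * (κ i).f x) + p i * ((1 - s i) * (ρ i).f x) := by ring
        _ = p i * (s i * (κ' i).f x) + p i * ((1 - s i) * (ρ i).f x) := by rw [h2, h3]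
        _ = p i * (s i * (κ' i).f x + (1 - s i) * (ρ i).f x) := by ring
    rw [this]
    exact ptau_refl μ'
  · have hSpos : 0 < S := lt_of_le_of_ne hS0 (Ne.symm hSz)
    -- the moving part
    have hwk : ∀ i, 0 ≤ p i * s i / S := fun i =>
      div_nonneg (mul_nonneg (hμ.1 i) (hs0 i)) hS0
    have hwks : ∑ i, p i * s i / S = 1 := by
      rw [← Finset.sum_div, ← hS, div_self hSz]
    set K := Distr.combo (fun i => p i * s i / S) κ hwk hwks with hK
    set K' := Distr.combo (fun i => p i * s i / S) κ' hwk hwks with hK'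
    have hdK : dstep K τ K' :=
      dstep_combo_all (isCombo_combo _ _ _ _) (isCombo_combo _ _ _ _) hd
    by_cases hS1' : S = 1
    · -- everything moves
      refine (ptau_iff).2 ⟨S, K, μ, K', hS0, hS1, ?_, ?_, hdK⟩
      · intro x
        have hrest : ∀ i, p i * ((1 - s i) * (ρ i).f x) = 0 := by
          intro i
          have hsum : ∑ i, p i * (1 - s i) = 0 := by
            have : ∑ i, p i * (1 - s i) = (∑ i, p i) - ∑ i, p i * s i := by
              rw [← Finset.sum_sub_distrib]
              exact Finset.sum_congr rfl fun i _ => by ring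
            rw [this, hμ.2.1, ← hS, hS1', sub_self]
          have hterm : p i * (1 - s i) = 0 :=
            (Finset.sum_eq_zero_iff_of_nonneg (fun i _ =>
              mul_nonneg (hμ.1 i) (by linarith [hs1 i]))).1 hsum i (Finset.mem_univ i)
          rw [← mul_assoc, hterm, zero_mul]
        rw [hS1', sub_self, zero_mul, add_zero, one_mul]
        rw [hμ.2.2 x, hK]
        simp only [Distr.combo_f]
        refine Finset.sum_congr rfl fun i _ => ?_
        rw [hma i x, hS1', div_one]
        calc p i * (s i * (κ i).f x + (1 - s i) * (ρ i).f x)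
            = p i * s i * (κ i).f x + p i * ((1 - s i) * (ρ i).f x) := by ring
          _ = p i * s i * (κ i).f x := by rw [hrest i, add_zero]
      · intro x
        have hrest : ∀ i, p i * ((1 - s i) * (ρ i).f x) = 0 := by
          intro i
          have hsum : ∑ i, p i * (1 - s i) = 0 := by
            have : ∑ i, p i * (1 - s i) = (∑ i, p i) - ∑ i, p i * s i := by
              rw [← Finset.sum_sub_distrib]
              exact Finset.sum_congr rfl fun i _ => by ring
            rw [this, hμ.2.1, ← hS, hS1', sub_self]
          have hterm : p i * (1 - s i) = 0 :=
            (Finset.sum_eq_zero_iff_of_nonneg (fun i _ =>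
              mul_nonneg (hμ.1 i) (by linarith [hs1 i]))).1 hsum i (Finset.mem_univ i)
          rw [← mul_assoc, hterm, zero_mul]
        rw [hS1', sub_self, zero_mul, add_zero, one_mul]
        rw [hμ'.2.2 x, hK']
        simp only [Distr.combo_f]
        refine Finset.sum_congr rfl fun i _ => ?_
        rw [hmb i x, hS1', div_one]
        calc p i * (s i * (κ' i).f x + (1 - s i) * (ρ i).f x)
            = p i * s i * (κ' i).f x + p i * ((1 - s i) * (ρ i).f x) := by ring
          _ = p i * s i * (κ' i).f x := by rw [hrest i, add_zero]
    · -- a proper mix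
      have hSlt : S < 1 := lt_of_le_of_ne hS1 hS1'
      have hcompl : (0:ℝ) < 1 - S := by linarith
      have hwr : ∀ i, 0 ≤ p i * (1 - s i) / (1 - S) := fun i =>
        div_nonneg (mul_nonneg (hμ.1 i) (by linarith [hs1 i])) (by linarith)
      have hwrs : ∑ i, p i * (1 - s i) / (1 - S) = 1 := by
        rw [← Finset.sum_div]
        have : ∑ i, p i * (1 - s i) = 1 - S := by
          have : ∑ i, p i * (1 - s i) = (∑ i, p i) - ∑ i, p i * s i := by
            rw [← Finset.sum_sub_distrib]
            exact Finset.sum_congr rfl fun i _ => by ring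
          rw [this, hμ.2.1, ← hS]
        rw [this, div_self (ne_of_gt hcompl)]
      set Rst := Distr.combo (fun i => p i * (1 - s i) / (1 - S)) ρ hwr hwrs with hR
      refine (ptau_iff).2 ⟨S, K, Rst, K', hS0, hS1, ?_, ?_, hdK⟩
      · intro x
        rw [hμ.2.2 x, hK, hR]
        simp only [Distr.combo_f]
        rw [Finset.mul_sum, Finset.mul_sum, ← Finset.sum_add_distrib]
        refine Finset.sum_congr rfl fun i _ => ?_
        rw [hma i x]
        field_simp
      · intro x
        rw [hμ'.2.2 x, hK', hR]
        simp only [Distr.combo_f]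
        rw [Finset.mul_sum, Finset.mul_sum, ← Finset.sum_add_distrib]
        refine Finset.sum_congr rfl fun i _ => ?_
        rw [hmb i x]
        field_simp

theorem ptau_combo {I : Type} [Fintype I] {p : I → ℝ} {a b : I → Distr (PE Act)}
    {μ μ' : Distr (PE Act)}
    (hμ : IsCombo p a μ) (hμ' : IsCombo p b μ')
    (h : ∀ i, p i ≠ 0 → ptau τ (a i) (b i)) : ptau τ μ μ' := by
  classical
  refine ptau_combo_all (b := fun i => if p i = 0 then a i else b i) hμ
    (isCombo_of_eq hμ' fun i hi => (if_neg hi).symm) fun i => ?_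
  beta_reduce
  by_cases hi : p i = 0
  · rw [if_pos hi]
    exact ptau_refl _
  · rw [if_neg hi]
    exact h i hi

end Tau
section Wtau
variable {Act : Type} {τ : Act}

/-- `n`-step `ptau` chains. -/
def ptauN (τ : Act) : ℕ → Distr (PE Act) → Distr (PE Act) → Prop
  | 0 => Eq
  | n + 1 => fun μ μ' => ∃ ξ, ptau τ μ ξ ∧ ptauN τ n ξ μ'

theorem ptauN_succ_of {n : ℕ} {μ μ' : Distr (PE Act)} (h : ptauN τ n μ μ') :
    ptauN τ (n + 1) μ μ' := ⟨μ, ptau_refl μ, h⟩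

theorem ptauN_mono {n m : ℕ} (hnm : n ≤ m) {μ μ' : Distr (PE Act)}
    (h : ptauN τ n μ μ') : ptauN τ m μ μ' := by
  induction hnm with
  | refl => exact h
  | step _ ih => exact ptauN_succ_of ih

theorem ptauN_snoc {n : ℕ} {μ ξ μ' : Distr (PE Act)} (h : ptauN τ n μ ξ)
    (hstep : ptau τ ξ μ') : ptauN τ (n + 1) μ μ' := by
  induction n generalizing μ with
  | zero => exact ⟨μ', h ▸ hstep, rfl⟩
  | succ n ih =>
    obtain ⟨ζ, h1, h2⟩ := h
    exact ⟨ζ, h1, ih h2⟩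

theorem wtau_iff_ptauN {μ μ' : Distr (PE Act)} :
    wtau τ μ μ' ↔ ∃ n, ptauN τ n μ μ' := by
  constructor
  · intro h
    induction h with
    | refl => exact ⟨0, rfl⟩
    | tail _ hstep ih =>
      obtain ⟨n, hn⟩ := ih
      exact ⟨n + 1, ptauN_snoc hn hstep⟩
  · rintro ⟨n, hn⟩
    induction n generalizing μ with
    | zero => exact hn ▸ Relation.ReflTransGen.refl
    | succ n ih =>
      obtain ⟨ξ, h1, h2⟩ := hn
      exact Relation.ReflTransGen.head h1 (ih h2)

theorem ptauN_combo_all {n : ℕ} {I : Type} [Fintype I] {p : I → ℝ}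
    {a b : I → Distr (PE Act)} {μ μ' : Distr (PE Act)}
    (hμ : IsCombo p a μ) (hμ' : IsCombo p b μ')
    (h : ∀ i, ptauN τ n (a i) (b i)) : ptauN τ n μ μ' := by
  induction n generalizing a μ with
  | zero =>
    have : μ = μ' := by
      apply Distr.ext'
      intro x
      rw [hμ.2.2 x, hμ'.2.2 x]
      exact Finset.sum_congr rfl fun i _ => by rw [h i]
    exact this
  | succ n ih =>
    choose c h1 h2 using h
    have hcombo := isCombo_combo p c hμ.1 hμ.2.1
    exact ⟨Distr.combo p c hμ.1 hμ.2.1, ptau_combo_all hμ hcombo h1, ih hcombo h2⟩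

/-- Combining `wtau`s along a convex combination. -/
theorem wtau_combo {I : Type} [Fintype I] {p : I → ℝ}
    {a b : I → Distr (PE Act)} {μ μ' : Distr (PE Act)}
    (hμ : IsCombo p a μ) (hμ' : IsCombo p b μ')
    (h : ∀ i, p i ≠ 0 → wtau τ (a i) (b i)) : wtau τ μ μ' := by
  classical
  have h' : ∀ i, wtau τ (a i) ((fun i => if p i = 0 then a i else b i) i) := by
    intro i
    beta_reduce
    by_cases hi : p i = 0
    · rw [if_pos hi]
      exact Relation.ReflTransGen.refl
    · rw [if_neg hi]
      exact h i hi
  have hμ'' : IsCombo p (fun i => if p i = 0 then a i else b i) μ' :=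
    isCombo_of_eq hμ' fun i hi => (if_neg hi).symm
  choose n hn using fun i => (wtau_iff_ptauN).1 (h' i)
  have hN : ∀ i, ptauN τ (Finset.univ.sup n) (a i) ((fun i => if p i = 0 then a i else b i) i) :=
    fun i => ptauN_mono (Finset.le_sup (Finset.mem_univ i)) (hn i)
  exact (wtau_iff_ptauN).2 ⟨_, ptauN_combo_all hμ hμ'' hN⟩

end Wtau
section BB
variable {Act : Type} {τ : Act}

/-- Equality is a branching bisimulation. -/
theorem isBranchingBisim_eq : IsBranchingBisim τ (Eq : Distr (PE Act) → Distr (PE Act) → Prop) := by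
  refine ⟨fun _ _ h => h.symm, ?_, ?_⟩
  · intro I _ p μs μ ν h hc
    subst h
    exact ⟨μ, μs, Relation.ReflTransGen.refl, rfl, hc, fun i => rfl⟩
  · intro μ ν α μ' h hstep
    subst h
    exact ⟨μ, μ', Relation.ReflTransGen.refl, Or.inl hstep, rfl, rfl⟩

theorem bb_refl (μ : Distr (PE Act)) : bb τ μ μ := ⟨Eq, isBranchingBisim_eq, rfl⟩

theorem bb_symm {μ ν : Distr (PE Act)} (h : bb τ μ ν) : bb τ ν μ := by
  obtain ⟨R, hR, hmem⟩ := h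
  exact ⟨R, hR, hR.1 hmem⟩

/-- `≈_b` is itself a branching bisimulation. -/
theorem bb_isBisim : IsBranchingBisim τ (bb (Act := Act) τ) := by
  refine ⟨fun _ _ h => bb_symm h, ?_, ?_⟩
  · intro I _ p μs μ ν h hc
    obtain ⟨R, hR, hmem⟩ := h
    obtain ⟨ν', νs, h1, h2, h3, h4⟩ := hR.2.1 I ‹Fintype I› p μs μ ν hmem hc
    exact ⟨ν', νs, h1, ⟨R, hR, h2⟩, h3, fun i => ⟨R, hR, h4 i⟩⟩
  · intro μ ν α μ' h hstep
    obtain ⟨R, hR, hmem⟩ := h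
    obtain ⟨ν', ν'', h1, h2, h3, h4⟩ := hR.2.2 μ ν α μ' hmem hstep
    exact ⟨ν', ν'', h1, h2, ⟨R, hR, h3⟩, ⟨R, hR, h4⟩⟩

/-- Combining `optStep`s along a convex combination. -/
theorem optStep_combo {I : Type} [Fintype I] {p : I → ℝ} {a b : I → Distr (PE Act)}
    {μ μ' : Distr (PE Act)} {α : Act}
    (hμ : IsCombo p a μ) (hμ' : IsCombo p b μ')
    (h : ∀ i, p i ≠ 0 → optStep τ (a i) α (b i))
    (heq : ∀ i, p i = 0 → a i = b i) : optStep τ μ α μ' := by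
  by_cases hα : α = τ
  · subst hα
    refine Or.inr ⟨rfl, ptau_combo_all hμ hμ' fun i => ?_⟩
    by_cases hi : p i = 0
    · rw [heq i hi]
      exact ptau_refl _
    · rcases h i hi with hd | ⟨_, hp⟩
      · exact Or.inl hd
      · exact hp
  · refine Or.inl (dstep_combo hμ hμ' fun i hi => ?_)
    rcases h i hi with hd | ⟨he, _⟩
    · exact hd
    · exact absurd he hα

end BB
section Coupling
variable {X : Type} [Inhabited X]

/-- The coupling (common refinement) of two convex decompositions of the same
distribution. -/
theorem coupling {I J : Type} [Fintype I] [Fintype J] {p : I → ℝ} {q : J → ℝ}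
    {μs : I → Distr X} {κs : J → Distr X} {μ : Distr X}
    (h1 : IsCombo p μs μ) (h2 : IsCombo q κs μ) :
    ∃ (w : I → J → ℝ) (ξ : I → J → Distr X),
      (∀ i j, 0 ≤ w i j) ∧
      (∀ i, ∑ j, w i j = p i) ∧
      (∀ j, ∑ i, w i j = q j) ∧
      (∀ i x, ∑ j, w i j * (ξ i j).f x = p i * (μs i).f x) ∧
      (∀ j x, ∑ i, w i j * (ξ i j).f x = q j * (κs j).f x) ∧
      (∀ i j, w i j ≠ 0 → Function.support (ξ i j).f ⊆ Function.support (κs j).f) := by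
  classical
  set m : I → J → X → ℝ :=
    fun i j x => (p i * (μs i).f x) * (q j * (κs j).f x) / μ.f x with hm
  -- basic facts about `m`
  have hm0 : ∀ i j x, 0 ≤ m i j x := fun i j x =>
    div_nonneg (mul_nonneg (mul_nonneg (h1.1 i) ((μs i).nonneg x))
      (mul_nonneg (h2.1 j) ((κs j).nonneg x))) (μ.nonneg x)
  have hterm_zero : ∀ x, μ.f x = 0 → ∀ i, p i * (μs i).f x = 0 := by
    intro x hx i
    have := (Finset.sum_eq_zero_iff_of_nonneg (fun i _ =>
      mul_nonneg (h1.1 i) ((μs i).nonneg x))).1 ((h1.2.2 x).symm.trans hx)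
    exact this i (Finset.mem_univ i)
  have hterm_zero' : ∀ x, μ.f x = 0 → ∀ j, q j * (κs j).f x = 0 := by
    intro x hx j
    have := (Finset.sum_eq_zero_iff_of_nonneg (fun j _ =>
      mul_nonneg (h2.1 j) ((κs j).nonneg x))).1 ((h2.2.2 x).symm.trans hx)
    exact this j (Finset.mem_univ j)
  have hrow : ∀ i x, ∑ j, m i j x = p i * (μs i).f x := by
    intro i x
    by_cases hx : μ.f x = 0
    · rw [hterm_zero x hx i]
      refine Finset.sum_eq_zero fun j _ => ?_
      show p i * (μs i).f x * (q j * (κs j).f x) / μ.f x = 0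
      rw [hterm_zero' x hx j, mul_zero, zero_div]
    · have : ∑ j, m i j x = (p i * (μs i).f x) * (∑ j, q j * (κs j).f x) / μ.f x := by
        rw [Finset.mul_sum, Finset.sum_div]
      rw [this, ← h2.2.2 x, mul_div_assoc, div_self hx, mul_one]
  have hcol : ∀ j x, ∑ i, m i j x = q j * (κs j).f x := by
    intro j x
    by_cases hx : μ.f x = 0
    · rw [hterm_zero' x hx j]
      refine Finset.sum_eq_zero fun i _ => ?_
      show p i * (μs i).f x * (q j * (κs j).f x) / μ.f x = 0
      rw [hterm_zero x hx i, zero_mul, zero_div]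
    · have : ∑ i, m i j x = (∑ i, p i * (μs i).f x) * (q j * (κs j).f x) / μ.f x := by
        rw [Finset.sum_mul, Finset.sum_div]
      rw [this, ← h1.2.2 x, mul_comm, mul_div_assoc, div_self hx, mul_one]
  -- support of `m i j` is contained in the support of `μ`, `μs i` and `κs j`
  have hmsupp : ∀ i j x, m i j x ≠ 0 →
      μ.f x ≠ 0 ∧ (μs i).f x ≠ 0 ∧ (κs j).f x ≠ 0 := by
    intro i j x hx
    refine ⟨fun h => hx ?_, fun h => hx ?_, fun h => hx ?_⟩ <;>
      simp [hm, h]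
  set S : Finset X := μ.fin.toFinset with hS
  have hmS : ∀ i j, Function.support (m i j) ⊆ (S : Set X) := by
    intro i j x hx
    simp only [hS, Set.Finite.coe_toFinset, Function.mem_support]
    exact (hmsupp i j x hx).1
  set w : I → J → ℝ := fun i j => ∑ x ∈ S, m i j x with hw
  have hw0 : ∀ i j, 0 ≤ w i j := fun i j =>
    Finset.sum_nonneg fun x _ => hm0 i j x
  have hwfin : ∀ i j, ∑ᶠ x, m i j x = w i j := fun i j =>
    finsum_eq_finset_sum_of_support_subset _ (hmS i j)
  -- the component distributions
  have hξ : ∀ i j, w i j ≠ 0 →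
      ∃ ξ : Distr X, (∀ x, ξ.f x = m i j x / w i j) := by
    intro i j hwij
    refine ⟨⟨fun x => m i j x / w i j, fun x => div_nonneg (hm0 i j x) (hw0 i j), ?_, ?_⟩,
      fun x => rfl⟩
    · apply Set.Finite.subset (κs j).fin
      intro x hx
      simp only [Function.mem_support] at hx ⊢
      intro h
      apply hx
      rw [div_eq_zero_iff]
      left
      by_contra h'
      exact (hmsupp i j x h').2.2 h
    · have hfin : (Function.support (m i j)).Finite :=
        Set.Finite.subset (Set.Finite.ofFinset S fun x => by simp) (hmS i j)
      have : ∑ᶠ x, m i j x / w i j = (∑ᶠ x, m i j x) / w i j := by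
        simp only [div_eq_mul_inv]
        exact (finsum_mul _ _).symm
      rw [this, hwfin, div_self hwij]
  choose ξ0 hξ0 using hξ
  set ξ : I → J → Distr X := fun i j =>
    if h : w i j = 0 then Distr.dirac default else ξ0 i j h with hξdef
  have hkey : ∀ i j x, w i j * (ξ i j).f x = m i j x := by
    intro i j x
    by_cases h : w i j = 0
    · have hmz : m i j x = 0 := by
        by_cases hxS : x ∈ S
        · exact (Finset.sum_eq_zero_iff_of_nonneg fun y _ => hm0 i j y).1 h x hxS
        · by_contra hne
          exact hxS (by
            have := hmS i j (Function.mem_support.2 hne)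
            simpa using this)
      rw [h, zero_mul, hmz]
    · simp only [hξdef]
      rw [dif_neg h, hξ0 i j h x, mul_div_cancel₀ _ h]
  refine ⟨w, ξ, hw0, ?_, ?_, ?_, ?_, ?_⟩
  · -- row sums
    intro i
    have : ∑ j, w i j = ∑ x ∈ S, ∑ j, m i j x := by
      rw [Finset.sum_comm]
    rw [this]
    have : ∑ x ∈ S, ∑ j, m i j x = ∑ x ∈ S, p i * (μs i).f x := by
      exact Finset.sum_congr rfl fun x _ => hrow i x
    rw [this]
    have hsub : Function.support (fun x => p i * (μs i).f x) ⊆ (S : Set X) := by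
      intro x hx
      simp only [Function.mem_support] at hx
      have h1x : p i * (μs i).f x ≤ μ.f x := by
        rw [h1.2.2 x]
        exact Finset.single_le_sum (fun k _ => mul_nonneg (h1.1 k) ((μs k).nonneg x))
          (Finset.mem_univ i)
      have : μ.f x ≠ 0 := by
        intro hz
        have h0 : 0 ≤ p i * (μs i).f x := mul_nonneg (h1.1 i) ((μs i).nonneg x)
        exact hx (le_antisymm (hz ▸ h1x) h0)
      simp only [hS, Set.Finite.coe_toFinset, Function.mem_support]
      exact this
    rw [← finsum_eq_finset_sum_of_support_subset _ hsub, ← mul_finsum (μs i).f (p i),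
      (μs i).sum_one, mul_one]
  · -- column sums
    intro j
    have : ∑ i, w i j = ∑ x ∈ S, ∑ i, m i j x := by
      rw [Finset.sum_comm]
    rw [this]
    have : ∑ x ∈ S, ∑ i, m i j x = ∑ x ∈ S, q j * (κs j).f x := by
      exact Finset.sum_congr rfl fun x _ => hcol j x
    rw [this]
    have hsub : Function.support (fun x => q j * (κs j).f x) ⊆ (S : Set X) := by
      intro x hx
      simp only [Function.mem_support] at hx
      have h1x : q j * (κs j).f x ≤ μ.f x := by
        rw [h2.2.2 x]
        exact Finset.single_le_sum (fun k _ => mul_nonneg (h2.1 k) ((κs k).nonneg x))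
          (Finset.mem_univ j)
      have : μ.f x ≠ 0 := by
        intro hz
        have h0 : 0 ≤ q j * (κs j).f x := mul_nonneg (h2.1 j) ((κs j).nonneg x)
        exact hx (le_antisymm (hz ▸ h1x) h0)
      simp only [hS, Set.Finite.coe_toFinset, Function.mem_support]
      exact this
    rw [← finsum_eq_finset_sum_of_support_subset _ hsub, ← mul_finsum (κs j).f (q j),
      (κs j).sum_one, mul_one]
  · -- row identity, pointwise
    intro i x
    rw [← hrow i x]
    exact Finset.sum_congr rfl fun j _ => hkey i j x
  · -- column identity, pointwise
    intro j x
    rw [← hcol j x]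
    exact Finset.sum_congr rfl fun i _ => hkey i j x
  · -- supports
    intro i j hwij x hx
    simp only [Function.mem_support] at hx ⊢
    intro hz
    apply hx
    have : w i j * (ξ i j).f x = 0 := by
      rw [hkey i j x]
      by_contra h'
      exact (hmsupp i j x h').2.2 hz
    rcases mul_eq_zero.1 this with h' | h'
    · exact absurd h' hwij
    · exact h'

end Coupling
section Main
variable {Act : Type} {τ : Act}

instance : Inhabited (PE Act) := ⟨PE.zero⟩

/-- The convex-combination closure of `≈_b`. -/
def Rbar (τ : Act) (μ ν : Distr (PE Act)) : Prop :=
  ∃ (I : Type) (_ : Fintype I) (p : I → ℝ) (μs νs : I → Distr (PE Act)),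
    IsCombo p μs μ ∧ IsCombo p νs ν ∧ ∀ i, bb τ (μs i) (νs i)

theorem isCombo_single {X : Type} (μ : Distr X) :
    IsCombo (fun _ : PUnit => (1:ℝ)) (fun _ => μ) μ :=
  ⟨fun _ => zero_le_one, by simp, fun x => by simp⟩

theorem Rbar_of_bb {μ ν : Distr (PE Act)} (h : bb τ μ ν) : Rbar τ μ ν :=
  ⟨PUnit, inferInstance, fun _ => 1, fun _ => μ, fun _ => ν,
    isCombo_single μ, isCombo_single ν, fun _ => h⟩

theorem Rbar_symm : Symmetric (Rbar (Act := Act) τ) := by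
  rintro μ ν ⟨I, ftI, p, μs, νs, h1, h2, h3⟩
  exact ⟨I, ftI, p, νs, μs, h2, h1, fun i => bb_symm (h3 i)⟩

theorem Rbar_weaklyDecomposable : WeaklyDecomposable τ (Rbar (Act := Act) τ) := by
  intro J ftJ q κs μ ν hR hq
  letI := ftJ
  obtain ⟨I, ftI, p, μs, νs, hpμ, hpν, hbb⟩ := hR
  letI := ftI
  obtain ⟨w, ξ, hw0, hrow, hcol, hrowx, hcolx, hsupp⟩ := coupling hpμ hq
  have hwzr : ∀ i, p i = 0 → ∀ j, w i j = 0 := by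
    intro i hi j
    exact (Finset.sum_eq_zero_iff_of_nonneg fun j _ => hw0 i j).1
      ((hrow i).trans hi) j (Finset.mem_univ j)
  have hwzc : ∀ j, q j = 0 → ∀ i, w i j = 0 := by
    intro j hj i
    exact (Finset.sum_eq_zero_iff_of_nonneg fun i _ => hw0 i j).1
      ((hcol j).trans hj) i (Finset.mem_univ i)
  -- response of each component
  have hstep : ∀ i, ∃ (ν' : Distr (PE Act)) (ζ : J → Distr (PE Act)),
      wtau τ (νs i) ν' ∧ bb τ (μs i) ν' ∧ (∀ j, bb τ (ξ i j) (ζ j)) ∧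
      (p i ≠ 0 → ∀ x, ν'.f x = ∑ j, w i j / p i * (ζ j).f x) := by
    intro i
    by_cases hi : p i = 0
    · exact ⟨νs i, ξ i, Relation.ReflTransGen.refl, hbb i, fun j => bb_refl _,
        fun h => absurd hi h⟩
    · have hcomb : IsCombo (fun j => w i j / p i) (ξ i) (μs i) := by
        refine ⟨fun j => div_nonneg (hw0 i j) (hpμ.1 i), ?_, fun x => ?_⟩
        · rw [← Finset.sum_div, hrow i, div_self hi]
        · have h' : ∑ j, w i j / p i * (ξ i j).f x
              = (∑ j, w i j * (ξ i j).f x) / p i := by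
            rw [Finset.sum_div]
            exact Finset.sum_congr rfl fun j _ => by ring
          rw [h', hrowx i x, mul_comm, mul_div_assoc, div_self hi, mul_one]
      obtain ⟨ν', ζ, h1, h2, h3, h4⟩ :=
        bb_isBisim.2.1 J ‹Fintype J› (fun j => w i j / p i) (ξ i) (μs i) (νs i)
          (hbb i) hcomb
      exact ⟨ν', ζ, h1, h2, h4, fun _ x => h3.2.2 x⟩
  choose nb ζ hwt hbb2 hbbζ hnb using hstep
  refine ⟨Distr.combo p nb hpν.1 hpν.2.1,
    fun j => if h : q j = 0 then κs j else
      Distr.combo (fun i => w i j / q j) (fun i => ζ i j)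
        (fun i => div_nonneg (hw0 i j) (hq.1 j))
        (by rw [← Finset.sum_div, hcol j, div_self h]),
    wtau_combo hpν (isCombo_combo p nb hpν.1 hpν.2.1) (fun i _ => hwt i),
    ⟨I, ftI, p, μs, nb, hpμ, isCombo_combo p nb hpν.1 hpν.2.1, hbb2⟩, ?_, ?_⟩
  · -- the resulting decomposition
    refine ⟨hq.1, hq.2.1, fun x => ?_⟩
    have hA : ∀ i, p i * (nb i).f x = ∑ j, w i j * (ζ i j).f x := by
      intro i
      by_cases hi : p i = 0
      · rw [hi, zero_mul]
        exact (Finset.sum_eq_zero fun j _ => by rw [hwzr i hi j, zero_mul]).symm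
      · rw [hnb i hi x, Finset.mul_sum]
        exact Finset.sum_congr rfl fun j _ => by
          rw [← mul_assoc, mul_div_cancel₀ _ hi]
    have hB : ∀ j, q j *
        ((if h : q j = 0 then κs j else
          Distr.combo (fun i => w i j / q j) (fun i => ζ i j)
            (fun i => div_nonneg (hw0 i j) (hq.1 j))
            (by rw [← Finset.sum_div, hcol j, div_self h])).f x)
        = ∑ i, w i j * (ζ i j).f x := by
      intro j
      by_cases hj : q j = 0
      · rw [dif_pos hj, hj, zero_mul]
        exact (Finset.sum_eq_zero fun i _ => by rw [hwzc j hj i, zero_mul]).symm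
      · rw [dif_neg hj]
        simp only [Distr.combo_f]
        rw [Finset.mul_sum]
        exact Finset.sum_congr rfl fun i _ => by
          rw [← mul_assoc, mul_div_cancel₀ _ hj]
    calc (Distr.combo p nb hpν.1 hpν.2.1).f x
        = ∑ i, p i * (nb i).f x := rfl
      _ = ∑ i, ∑ j, w i j * (ζ i j).f x := Finset.sum_congr rfl fun i _ => hA i
      _ = ∑ j, ∑ i, w i j * (ζ i j).f x := Finset.sum_comm
      _ = ∑ j, q j * _ := (Finset.sum_congr rfl fun j _ => (hB j).symm)
  · -- componentwise relation
    intro j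
    beta_reduce
    by_cases hj : q j = 0
    · rw [dif_pos hj]
      exact Rbar_of_bb (bb_refl _)
    · rw [dif_neg hj]
      refine ⟨I, ftI, fun i => w i j / q j, fun i => ξ i j, fun i => ζ i j, ?_,
        isCombo_combo _ _ _ _, fun i => hbbζ i j⟩
      refine ⟨fun i => div_nonneg (hw0 i j) (hq.1 j), ?_, fun x => ?_⟩
      · rw [← Finset.sum_div, hcol j, div_self hj]
      · have h' : ∑ i, w i j / q j * (ξ i j).f x
            = (∑ i, w i j * (ξ i j).f x) / q j := by
          rw [Finset.sum_div]
          exact Finset.sum_congr rfl fun i _ => by ring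
        rw [h', hcolx j x, mul_comm, mul_div_assoc, div_self hj, mul_one]

end Main
section Main2
variable {Act : Type} {τ : Act}

theorem Rbar_transfer : ∀ (μ ν : Distr (PE Act)) (α : Act) (μ' : Distr (PE Act)),
    Rbar τ μ ν → dstep μ α μ' →
    ∃ ν' ν'', wtau τ ν ν' ∧ optStep τ ν' α ν'' ∧ Rbar τ μ ν' ∧ Rbar τ μ' ν'' := by
  intro μ ν α μ' hR hstep
  obtain ⟨I, ftI, p, μs, νs, hpμ, hpν, hbb⟩ := hR
  letI := ftI
  obtain ⟨K, ftK, c, Es, ms, hcE, hcm, hps⟩ := hstep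
  letI := ftK
  obtain ⟨w, ξ, hw0, hrow, hcol, hrowx, hcolx, hsupp⟩ := coupling hpμ hcE
  have hwzr : ∀ i, p i = 0 → ∀ k, w i k = 0 := by
    intro i hi k
    exact (Finset.sum_eq_zero_iff_of_nonneg fun k _ => hw0 i k).1
      ((hrow i).trans hi) k (Finset.mem_univ k)
  have hξdirac : ∀ i k, w i k ≠ 0 → ξ i k = Distr.dirac (Es k) := by
    intro i k h
    refine Distr.eq_dirac (subset_trans (hsupp i k h) ?_)
    intro x hx
    simp only [Function.mem_support] at hx
    by_contra hne
    simp only [Set.mem_singleton_iff] at hne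
    exact hx (by simp [Distr.dirac, hne])
  have hkey : ∀ i k x, w i k * (ξ i k).f x = w i k * (Distr.dirac (Es k)).f x := by
    intro i k x
    by_cases h : w i k = 0
    · rw [h, zero_mul, zero_mul]
    · rw [hξdirac i k h]
  -- the target of each row step
  set D : I → Distr (PE Act) := fun i =>
    if h : p i = 0 then νs i else
      Distr.combo (fun k => w i k / p i) ms
        (fun k => div_nonneg (hw0 i k) (hpμ.1 i))
        (by rw [← Finset.sum_div, hrow i, div_self h]) with hD
  have hrowstep : ∀ i, p i ≠ 0 → dstep (μs i) α (D i) := by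
    intro i hi
    refine ⟨K, ftK, fun k => w i k / p i, Es, ms, ?_, ?_, hps⟩
    · refine ⟨fun k => div_nonneg (hw0 i k) (hpμ.1 i), ?_, fun x => ?_⟩
      · rw [← Finset.sum_div, hrow i, div_self hi]
      · have h' : ∑ k, w i k / p i * (Distr.dirac (Es k)).f x
            = (∑ k, w i k * (ξ i k).f x) / p i := by
          rw [Finset.sum_div]
          refine Finset.sum_congr rfl fun k _ => ?_
          rw [hkey i k x]
          ring
        rw [h', hrowx i x, mul_comm, mul_div_assoc, div_self hi, mul_one]
    · rw [hD]
      simp only [dif_neg hi]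
      exact isCombo_combo _ _ _ _
  -- matched responses
  have hmatch : ∀ i, ∃ nb nb', wtau τ (νs i) nb ∧ bb τ (μs i) nb ∧
      (p i ≠ 0 → optStep τ nb α nb') ∧ bb τ (D i) nb' ∧ (p i = 0 → nb' = nb) := by
    intro i
    by_cases hi : p i = 0
    · refine ⟨νs i, νs i, Relation.ReflTransGen.refl, hbb i, fun h => absurd hi h, ?_,
        fun _ => rfl⟩
      rw [hD]
      simp only [dif_pos hi]
      exact bb_refl _
    · obtain ⟨nb, nb', h1, h2, h3, h4⟩ :=
        bb_isBisim.2.2 (μs i) (νs i) α (D i) (hbb i) (hrowstep i hi)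
      exact ⟨nb, nb', h1, h3, fun _ => h2, h4, fun h => absurd h hi⟩
  choose nb nb' h1 h2 h3 h4 h5 using hmatch
  have hDcombo : IsCombo p D μ' := by
    refine ⟨hpμ.1, hpμ.2.1, fun x => ?_⟩
    have hA : ∀ i, p i * (D i).f x = ∑ k, w i k * (ms k).f x := by
      intro i
      by_cases hi : p i = 0
      · rw [hi, zero_mul]
        exact (Finset.sum_eq_zero fun k _ => by rw [hwzr i hi k, zero_mul]).symm
      · rw [hD]
        simp only [dif_neg hi, Distr.combo_f]
        rw [Finset.mul_sum]
        exact Finset.sum_congr rfl fun k _ => by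
          rw [← mul_assoc, mul_div_cancel₀ _ hi]
    calc μ'.f x = ∑ k, c k * (ms k).f x := hcm.2.2 x
      _ = ∑ k, ∑ i, w i k * (ms k).f x := by
          refine Finset.sum_congr rfl fun k _ => ?_
          rw [← hcol k, Finset.sum_mul]
      _ = ∑ i, ∑ k, w i k * (ms k).f x := Finset.sum_comm
      _ = ∑ i, p i * (D i).f x := Finset.sum_congr rfl fun i _ => (hA i).symm
  refine ⟨Distr.combo p nb hpν.1 hpν.2.1, Distr.combo p nb' hpν.1 hpν.2.1,
    wtau_combo hpν (isCombo_combo p nb hpν.1 hpν.2.1) (fun i _ => h1 i),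
    optStep_combo (isCombo_combo p nb hpν.1 hpν.2.1)
      (isCombo_combo p nb' hpν.1 hpν.2.1) (fun i hi => h3 i hi)
      (fun i hi => (h5 i hi).symm),
    ⟨I, ftI, p, μs, nb, hpμ, isCombo_combo p nb hpν.1 hpν.2.1, h2⟩,
    ⟨I, ftI, p, D, nb', hDcombo, isCombo_combo p nb' hpν.1 hpν.2.1, h4⟩⟩

/-- `Rbar` is a branching probabilistic bisimulation. -/
theorem Rbar_isBisim : IsBranchingBisim τ (Rbar (Act := Act) τ) :=
  ⟨Rbar_symm, Rbar_weaklyDecomposable, Rbar_transfer⟩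

end Main2
/-- Branching probabilistic bisimilarity is a congruence for probabilistic choice. -/
theorem statement2 {Act : Type} (τ : Act) {μ₁ μ₂ ν₁ ν₂ μ ν : Distr (PE Act)}
    (r : ℝ) (hr0 : 0 < r) (hr1 : r < 1)
    (h1 : bb τ μ₁ ν₁) (h2 : bb τ μ₂ ν₂)
    (hμ : IsMix r μ₁ μ₂ μ) (hν : IsMix r ν₁ ν₂ ν) :
    bb τ μ ν := by
  refine ⟨Rbar τ, Rbar_isBisim, Bool, inferInstance, fun b => if b then r else 1 - r,
    fun b => if b then μ₁ else μ₂, fun b => if b then ν₁ else ν₂, ?_, ?_, ?_⟩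
  · refine ⟨?_, ?_, fun x => ?_⟩
    · intro b; cases b <;> simp <;> linarith
    · simp
    · rw [hμ x, Fintype.sum_bool]
      simp
  · refine ⟨?_, ?_, fun x => ?_⟩
    · intro b; cases b <;> simp <;> linarith
    · simp
    · rw [hν x, Fintype.sum_bool]
      simp
  · intro b; cases b <;> simp [h1, h2]

end PBB
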